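/- For every T ∈ M_r(ℂ) and λ ∈ (0,1), the matrices T and Δ_λ(T) have the same characteristic polynomial; in particular they have the same spectrum with the same algebraic multiplicities. -/

import Mathlib

open Matrix
open scoped ComplexOrder

section Helpers
open Polynomial

variable {n : Type*} [Fintype n] [DecidableEq n]

lemma my_charpoly_mul_comm (A B : Matrix n n ℂ) :
    (A * B).charpoly = (B * A).charpoly := by
  classical
  set X' : Matrix n n ℂ[X] := Matrix.scalar n (X : ℂ[X]) with hX'
  set A' : Matrix n n ℂ[X] := A.map C with hA'
  set B' : Matrix n n ℂ[X] := B.map C with hB'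
  set L : Matrix (n ⊕ n) (n ⊕ n) ℂ[X] := fromBlocks 1 0 (-B') X' with hL
  set E : Matrix (n ⊕ n) (n ⊕ n) ℂ[X] := fromBlocks X' A' B' 1 with hE
  have hcomm : ∀ M : Matrix n n ℂ[X], X' * M = M * X' :=
    fun M => (Matrix.scalar_commute (X : ℂ[X]) (Commute.all _) M).eq
  have h1 : L * E = fromBlocks X' A' 0 (X' - B' * A') := by
    rw [hL, hE, fromBlocks_multiply]
    simp [hcomm B', sub_eq_add_neg, add_comm]
  have h2 : E * L = fromBlocks (X' - A' * B') (A' * X') 0 X' := by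
    rw [hL, hE, fromBlocks_multiply]
    simp [sub_eq_add_neg]
  have hdet : (L * E).det = (E * L).det := by
    rw [det_mul, det_mul, mul_comm]
  rw [h1, h2, det_fromBlocks_zero₂₁, det_fromBlocks_zero₂₁] at hdet
  have hcm : ∀ M N : Matrix n n ℂ, charmatrix (M * N) = X' - M.map C * N.map C := by
    intro M N
    rw [charmatrix, _root_.map_mul]
    rfl
  have hXdet : X'.det ≠ 0 := by
    rw [hX']
    rw [Matrix.scalar_apply, det_diagonal, Finset.prod_const]
    exact pow_ne_zero _ X_ne_zero
  have : X'.det * (X' - B' * A').det = (X' - A' * B').det * X'.det := hdet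
  have key : (X' - A' * B').det = (X' - B' * A').det := by
    apply mul_right_cancel₀ hXdet
    rw [← this, mul_comm]
  rw [Matrix.charpoly, Matrix.charpoly, hcm A B, hcm B A, ← hA', ← hB', key]

lemma my_mem_spectrum_iff (M : Matrix n n ℂ) (μ : ℂ) :
    μ ∈ spectrum ℂ M ↔ M.charpoly.eval μ = 0 := by
  rw [spectrum.mem_iff, Matrix.isUnit_iff_isUnit_det, isUnit_iff_ne_zero, not_not]
  have : ((algebraMap ℂ (Matrix n n ℂ)) μ - M).det = M.charpoly.eval μ := by
    rw [Matrix.charpoly, ← Polynomial.coe_evalRingHom, RingHom.map_det]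
    congr 1
    ext i j
    simp [charmatrix_apply, Matrix.algebraMap_matrix_apply, diagonal_apply,
      apply_ite (Polynomial.eval μ)]
  rw [this]

lemma my_cfc_mul {A : Matrix n n ℂ} (hA : A.IsHermitian) (f g : ℝ → ℝ) :
    hA.cfc f * hA.cfc g = hA.cfc (fun x => f x * g x) := by
  have key : (star (hA.eigenvectorUnitary : Matrix n n ℂ)) *
      (hA.eigenvectorUnitary : Matrix n n ℂ) = 1 :=
    Unitary.star_mul_self_of_mem (SetLike.coe_mem _)
  rw [Matrix.IsHermitian.cfc, Matrix.IsHermitian.cfc, Matrix.IsHermitian.cfc]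
  simp only [Unitary.conjStarAlgAut_apply]
  have rearr : ∀ a b c d e f : Matrix n n ℂ,
      (a * b * c) * (d * e * f) = a * (b * (c * d) * e) * f := by
    intros; simp only [mul_assoc]
  rw [rearr, key, mul_one, diagonal_mul_diagonal]
  congr 2
  ext i j
  simp [diagonal_apply, Function.comp]

lemma my_cfc_congr {A : Matrix n n ℂ} (hA : A.IsHermitian) {f g : ℝ → ℝ}
    (h : ∀ i, f (hA.eigenvalues i) = g (hA.eigenvalues i)) :
    hA.cfc f = hA.cfc g := by
  rw [Matrix.IsHermitian.cfc, Matrix.IsHermitian.cfc]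
  congr 2
  ext i j
  simp [diagonal_apply, h i]

lemma my_cfc_id {A : Matrix n n ℂ} (hA : A.IsHermitian) :
    hA.cfc (fun x => x) = A := by
  conv_rhs => rw [hA.spectral_theorem]
  rfl

end Helpers


/-- `|T| = (Tᴴ T)^{1/2}`, the positive semidefinite absolute value of a matrix. -/
noncomputable def matAbs {n : Type*} [Fintype n] [DecidableEq n]
    (T : Matrix n n ℂ) : Matrix n n ℂ :=
  (Matrix.posSemidef_conjTranspose_mul_self T).1.eigenvectorUnitary.1 *
    diagonal ((↑) ∘ (√·) ∘ (Matrix.posSemidef_conjTranspose_mul_self T).1.eigenvalues) *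
    (star (Matrix.posSemidef_conjTranspose_mul_self T).1.eigenvectorUnitary : Matrix n n ℂ)

/-- Real power `P^l` of a Hermitian matrix, via the functional calculus
(junk value `0` if `P` is not Hermitian). -/
noncomputable def hermPow {n : Type*} [Fintype n] [DecidableEq n]
    (P : Matrix n n ℂ) (l : ℝ) : Matrix n n ℂ :=
  if h : P.IsHermitian then h.cfc (fun x : ℝ => x ^ l) else 0

/-- The λ-Aluthge transform `|T|^λ U |T|^{1-λ}`, where `U` is a polar part of `T`. -/
noncomputable def aluthge {n : Type*} [Fintype n] [DecidableEq n]
    (l : ℝ) (U T : Matrix n n ℂ) : Matrix n n ℂ :=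
  hermPow (matAbs T) l * U * hermPow (matAbs T) (1 - l)

/-- `T` and `Δ_λ(T)` have the same characteristic polynomial,
and in particular the same spectrum. -/
theorem charpoly_aluthge {r : ℕ} (l : ℝ) (hl : l ∈ Set.Ioo (0 : ℝ) 1)
    (T U : Matrix (Fin r) (Fin r) ℂ)
    (hU : U ∈ Matrix.unitaryGroup (Fin r) ℂ) (hpolar : T = U * matAbs T) :
    (aluthge l U T).charpoly = T.charpoly ∧
    spectrum ℂ (aluthge l U T) = spectrum ℂ T := by
  classical
  set P := matAbs T with hPdef
  have hP : P.PosSemidef := by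
    rw [hPdef, matAbs]
    exact (Matrix.posSemidef_diagonal_iff.2 fun i =>
      Complex.zero_le_real.2 (Real.sqrt_nonneg _)).mul_mul_conjTranspose_same _
  have hH : P.IsHermitian := hP.1
  have key1 : hermPow P (1 - l) * hermPow P l = P := by
    rw [hermPow, hermPow, dif_pos hH, dif_pos hH, my_cfc_mul,
      my_cfc_congr hH (g := fun x => x), my_cfc_id]
    intro i
    have hx : (0:ℝ) ≤ hH.eigenvalues i := hP.eigenvalues_nonneg i
    rw [← Real.rpow_add' hx (by norm_num), sub_add_cancel, Real.rpow_one]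
  have hab : aluthge l U T = hermPow P l * (U * hermPow P (1 - l)) := by
    rw [aluthge, mul_assoc]
  have hcp : (aluthge l U T).charpoly = T.charpoly := by
    rw [hab, my_charpoly_mul_comm, mul_assoc, key1, ← hpolar]
  refine ⟨hcp, ?_⟩
  ext z
  rw [my_mem_spectrum_iff, my_mem_spectrum_iff, hcp]
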